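/- For every w ∈ S_n, the columns of the Rothe diagram satisfy the northwest condition: if a ∈ C_{j_1}(w) and b ∈ C_{j_2}(w) with j_1 ≤ j_2, then min(a,b) ∈ C_{j_1}(w). Consequently, the inversion family I(w) is strongly separated. -/
import Mathlib


open MvPolynomial

noncomputable section

namespace BottSamelson

/-- The initial segment `[j] = {1,…,j}` (1-based), i.e. `{a : Fin n | (a:ℕ) < j}` (0-based). -/
def iseg (n j : ℕ) : Finset (Fin n) := Finset.univ.filter fun a => (a : ℕ) < j

/-- The generic upper-triangular matrix of variables: `X i j = x i j` for `i ≤ j`, else `0`. -/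
def Xut (n : ℕ) : Fin n → Fin n → MvPolynomial (Fin n × Fin n) ℂ :=
  fun i j => if i ≤ j then MvPolynomial.X (i, j) else 0

/-- The full generic matrix of variables. -/
def Xfull (n : ℕ) : Fin n → Fin n → MvPolynomial (Fin n × Fin n) ℂ :=
  fun i j => MvPolynomial.X (i, j)

/-- The minor of `M` on rows `R` and columns `C` (defined to be `0` if `R.card ≠ C.card`). -/
def minorOf {n : ℕ} (M : Fin n → Fin n → MvPolynomial (Fin n × Fin n) ℂ)
    (R C : Finset (Fin n)) : MvPolynomial (Fin n × Fin n) ℂ :=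
  if h : R.card = C.card then
    Matrix.det (Matrix.of fun a b : Fin C.card =>
      M (R.orderEmbOfFin h a) (C.orderEmbOfFin rfl b))
  else 0

/-- `R ≤ C` componentwise (including the requirement `|R| = |C|`). -/
def compLE {n : ℕ} (R C : Finset (Fin n)) : Prop :=
  ∃ h : R.card = C.card, ∀ t : Fin C.card, R.orderEmbOfFin h t ≤ C.orderEmbOfFin rfl t

/-- The flagged Weyl module `M^B_{D,m}`: the span of all products of flagged minors
`∏_k ∏_{t < m k} Δ̃_{D k}^{R k t}` with `R k t ≤ D k` componentwise. -/
def flaggedWeyl {n l : ℕ} (D : Fin l → Finset (Fin n)) (m : Fin l → ℕ) :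
    Submodule ℂ (MvPolynomial (Fin n × Fin n) ℂ) :=
  Submodule.span ℂ
    { f | ∃ R : (k : Fin l) → Fin (m k) → Finset (Fin n),
        (∀ k t, compLE (R k t) (D k)) ∧
        f = ∏ k : Fin l, ∏ t : Fin (m k), minorOf (Xut n) (R k t) (D k) }

/-- The (unflagged) Weyl module `M_{D,m}`: the span of all products of minors of the
full generic matrix with arbitrary row sets of the right cardinality. -/
def weylModule {n l : ℕ} (D : Fin l → Finset (Fin n)) (m : Fin l → ℕ) :
    Submodule ℂ (MvPolynomial (Fin n × Fin n) ℂ) :=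
  Submodule.span ℂ
    { f | ∃ R : (k : Fin l) → Fin (m k) → Finset (Fin n),
        (∀ k t, (R k t).card = (D k).card) ∧
        f = ∏ k : Fin l, ∏ t : Fin (m k), minorOf (Xfull n) (R k t) (D k) }

/-- The row-degree weight: the variable `x i j` has weight the `i`-th standard vector. -/
def rowWeight (n : ℕ) : Fin n × Fin n → (Fin n →₀ ℕ) := fun p => Finsupp.single p.1 1

/-- The dual character of a submodule of the polynomial ring, graded by row degree:
`char* M = Σ_μ dim (M_μ) · x^μ`. -/
def dualChar {n : ℕ} (M : Submodule ℂ (MvPolynomial (Fin n × Fin n) ℂ)) :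
    MvPolynomial (Fin n) ℤ :=
  ∑ᶠ μ : Fin n →₀ ℕ,
    MvPolynomial.monomial μ
      ((Module.finrank ℂ
        ↥(M ⊓ MvPolynomial.weightedHomogeneousSubmodule ℂ (rowWeight n) μ) : ℤ))

/-- The `j`-th column of the Rothe diagram of `w`:
`C_j(w) = {i : i < w⁻¹(j), w(i) > j}`. -/
def rotheCol {n : ℕ} (w : Equiv.Perm (Fin n)) (j : Fin n) : Finset (Fin n) :=
  Finset.univ.filter fun i => i < w.symm j ∧ j < w i

/-- The inversion family `I(w)`: the multiset of the nonempty columns of the Rothe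
diagram of `w`, counted with multiplicity. -/
def invFamily {n : ℕ} (w : Equiv.Perm (Fin n)) : Multiset (Finset (Fin n)) :=
  (Finset.univ.val.map fun j => rotheCol w j).filter fun C => C ≠ ∅

/-- The number of inversions (the length) of a permutation. -/
def invCount {n : ℕ} (w : Equiv.Perm (Fin n)) : ℕ :=
  (Finset.univ.filter fun p : Fin n × Fin n => p.1 < p.2 ∧ w p.2 < w p.1).card

/-- The simple transposition exchanging the (0-based) positions `a` and `a+1`
(the identity if out of range). -/
def sNat (n a : ℕ) : Equiv.Perm (Fin n) :=
  if h : a + 1 < n then Equiv.swap ⟨a, Nat.lt_of_succ_lt h⟩ ⟨a + 1, h⟩ else 1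

/-- The product `s_{i_1} ⋯ s_{i_k}` of the first `k` letters of the word `ii`
(letters written 0-based). -/
def wordProd (n : ℕ) {l : ℕ} (ii : Fin l → ℕ) (k : ℕ) : Equiv.Perm (Fin n) :=
  ((List.ofFn fun t => sNat n (ii t)).take k).prod

/-- The `k`-th chamber set `w_k[i_k]` of the word `ii`. -/
def chamberSet (n : ℕ) {l : ℕ} (ii : Fin l → ℕ) (k : Fin l) : Finset (Fin n) :=
  (iseg n (ii k + 1)).image (wordProd n ii ((k : ℕ) + 1))

/-- The full chamber family `D_i^+ = {[1],…,[n]} ∪ {w_k[i_k]}`. -/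
def fullChamberFam (n : ℕ) {l : ℕ} (ii : Fin l → ℕ) : Finset (Finset (Fin n)) :=
  (Finset.univ.image fun j : Fin n => iseg n ((j : ℕ) + 1)) ∪
    Finset.univ.image (chamberSet n ii)

/-- Two subsets are strongly separated. -/
def stronglySep {n : ℕ} (C C' : Finset (Fin n)) : Prop :=
  (∀ a ∈ C \ C', ∀ b ∈ C' \ C, a < b) ∨ ∀ a ∈ C' \ C, ∀ b ∈ C \ C', a < b

/-- The divided difference operator `∂ f = (f - s f)/(x_i - x_j)`, where `s` swaps the
variables `x_i` and `x_j` (defined as the unique polynomial `g` with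
`g·(x_i - x_j) = f - s f`). -/
def divDiff {n : ℕ} (i j : Fin n) (f : MvPolynomial (Fin n) ℤ) : MvPolynomial (Fin n) ℤ :=
  Classical.epsilon fun g =>
    g * (MvPolynomial.X i - MvPolynomial.X j) = f - MvPolynomial.rename (Equiv.swap i j) f

/-- The isobaric divided difference (Demazure operator)
`Λ f = (x_i f - x_j · s f)/(x_i - x_j)`. -/
def demazure {n : ℕ} (i j : Fin n) (f : MvPolynomial (Fin n) ℤ) : MvPolynomial (Fin n) ℤ :=
  Classical.epsilon fun g =>
    g * (MvPolynomial.X i - MvPolynomial.X j) =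
      MvPolynomial.X i * f - MvPolynomial.X j * MvPolynomial.rename (Equiv.swap i j) f

/-- The Demazure operator `Λ_a` for the (0-based) simple reflection `s_a`. -/
def demazureNat (n a : ℕ) (f : MvPolynomial (Fin n) ℤ) : MvPolynomial (Fin n) ℤ :=
  if h : a + 1 < n then demazure ⟨a, Nat.lt_of_succ_lt h⟩ ⟨a + 1, h⟩ f else f

/-- The divided difference `∂_a` for the (0-based) simple reflection `s_a`. -/
def divDiffNat (n a : ℕ) (f : MvPolynomial (Fin n) ℤ) : MvPolynomial (Fin n) ℤ :=
  if h : a + 1 < n then divDiff ⟨a, Nat.lt_of_succ_lt h⟩ ⟨a + 1, h⟩ f else f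

/-- The fundamental weight `ϖ_j = x_1 x_2 ⋯ x_j` (`j` counted 1-based). -/
def varpi (n j : ℕ) : MvPolynomial (Fin n) ℤ := ∏ t ∈ iseg n j, MvPolynomial.X t

/-- The nested Demazure expression `Λ_{a_1}(ϖ_{a_1}^{m_1}·Λ_{a_2}(⋯ Λ_{a_l}(ϖ_{a_l}^{m_l})⋯))`,
letters written 0-based. -/
def demazureWord (n : ℕ) : List (ℕ × ℕ) → MvPolynomial (Fin n) ℤ
  | [] => 1
  | (a, m) :: rest => demazureNat n a (varpi n (a + 1) ^ m * demazureWord n rest)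

/-- The successor in `Fin n` (fixing the top element). -/
def next {n : ℕ} (a : Fin n) : Fin n := if h : (a : ℕ) + 1 < n then ⟨a + 1, h⟩ else a

/-- The set of ascents of a permutation. -/
def ascents {n : ℕ} (w : Equiv.Perm (Fin n)) : Finset (Fin n) :=
  Finset.univ.filter fun a => w a < w (next a)

/-- The staircase monomial `x_1^{n-1} x_2^{n-2} ⋯ x_{n-1}`. -/
def staircase (n : ℕ) : MvPolynomial (Fin n) ℤ :=
  ∏ i : Fin n, MvPolynomial.X i ^ (n - 1 - (i : ℕ))

/-- Auxiliary recursion for the Schubert polynomial along first ascents. -/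
def schubertAux (n : ℕ) : ℕ → Equiv.Perm (Fin n) → MvPolynomial (Fin n) ℤ
  | 0, _ => staircase n
  | fuel + 1, w =>
    if h : (ascents w).Nonempty then
      divDiff ((ascents w).min' h) (next ((ascents w).min' h))
        (schubertAux n fuel (w * Equiv.swap ((ascents w).min' h) (next ((ascents w).min' h))))
    else staircase n

/-- The Schubert polynomial `𝔖(w)`, defined by
`𝔖(w₀) = x_1^{n-1}⋯x_{n-1}` and `𝔖(w) = ∂_i 𝔖(w s_i)` for `i` the first ascent of `w`. -/
def schubert {n : ℕ} (w : Equiv.Perm (Fin n)) : MvPolynomial (Fin n) ℤ :=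
  schubertAux n (n * n) w

/-- The general linear group `GL(n, ℂ)`. -/
abbrev GLn (n : ℕ) := Matrix.GeneralLinearGroup (Fin n) ℂ

/-- Membership in the Borel subgroup `B` of upper-triangular matrices. -/
def upperTri {n : ℕ} (g : GLn n) : Prop :=
  ∀ i j : Fin n, j < i → (g : Matrix (Fin n) (Fin n) ℂ) i j = 0

/-- The coordinate subspace `E_C = span{e_j : j ∈ C} ⊆ ℂⁿ`. -/
def coordSub {n : ℕ} (C : Finset (Fin n)) : Submodule ℂ (Fin n → ℂ) :=
  Submodule.span ℂ ((fun j => (Pi.single j 1 : Fin n → ℂ)) '' (C : Set (Fin n)))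

/-- The image subspace `A·V` of a subspace under a matrix. -/
def mapSub {n : ℕ} (A : Matrix (Fin n) (Fin n) ℂ) (V : Submodule ℂ (Fin n → ℂ)) :
    Submodule ℂ (Fin n → ℂ) :=
  Submodule.map (Matrix.toLin' A) V

/-- Lexicographic order on subsets: the smallest element of the symmetric difference
belongs to `C`. -/
def lexLT {n : ℕ} (C C' : Finset (Fin n)) : Prop :=
  ∃ a : Fin n, IsLeast (↑(C \ C' ∪ C' \ C) : Set (Fin n)) a ∧ a ∈ C

/-- The columns of the Rothe diagram of any `w ∈ S_n` satisfy the northwest condition;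
consequently the inversion family `I(w)` is strongly separated. -/
theorem rothe_columns_northwest_and_strongly_separated
    (n : ℕ) (w : Equiv.Perm (Fin n)) :
    (∀ j1 j2 : Fin n, j1 ≤ j2 →
      ∀ a ∈ rotheCol w j1, ∀ b ∈ rotheCol w j2, min a b ∈ rotheCol w j1)
    ∧ ∀ j1 j2 : Fin n, stronglySep (rotheCol w j1) (rotheCol w j2) := by
  have mem : ∀ (j i : Fin n), i ∈ rotheCol w j ↔ i < w.symm j ∧ j < w i := by
    intro j i
    simp [rotheCol]
  have nw : ∀ j1 j2 : Fin n, j1 ≤ j2 →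
      ∀ a ∈ rotheCol w j1, ∀ b ∈ rotheCol w j2, min a b ∈ rotheCol w j1 := by
    intro j1 j2 hj a ha b hb
    rw [mem] at ha hb ⊢
    rcases le_total a b with h | h
    · simpa [min_eq_left h] using ha
    · rw [min_eq_right h]
      exact ⟨lt_of_le_of_lt h ha.1, lt_of_le_of_lt hj hb.2⟩
  refine ⟨nw, ?_⟩
  intro j1 j2
  rcases le_total j1 j2 with hj | hj
  · left
    intro a ha b hb
    simp only [Finset.mem_sdiff] at ha hb
    rcases lt_trichotomy a b with h | h | h
    · exact h
    · exact absurd (h ▸ hb.1) ha.2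
    · have := nw j1 j2 hj a ha.1 b hb.1
      rw [min_eq_right h.le] at this
      exact absurd this hb.2
  · right
    intro a ha b hb
    simp only [Finset.mem_sdiff] at ha hb
    rcases lt_trichotomy a b with h | h | h
    · exact h
    · exact absurd (h ▸ hb.1) ha.2
    · have := nw j2 j1 hj a ha.1 b hb.1
      rw [min_eq_right h.le] at this
      exact absurd this hb.2

end BottSamelson
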